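/- (3/2-power decay ODE lemma) Let E > 0 and let y : [0,∞) → [0,∞) be continuously differentiable with y'(t) + E √(1+t) · y(t)^{3/2} ≤ 0 for all t ≥ 0. Then y(t) ≤ 36 y(0) / (6 + E √(y(0)) ((1+t)^{3/2} − 1))² for all t ≥ 0; in particular y(t) = O((1+t)^{−3}) as t → ∞. -/

import Mathlib

/-- 3/2-power decay ODE lemma: `y' + E √(1+t) y^{3/2} ≤ 0` gives decay `(1+t)^{-3}`. -/
theorem ode_three_halves_decay (E : ℝ) (hE : 0 < E) (y y' : ℝ → ℝ)
    (hnonneg : ∀ t : ℝ, 0 ≤ t → 0 ≤ y t)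
    (hderiv : ∀ t : ℝ, 0 ≤ t → HasDerivAt y (y' t) t)
    (hcont : ContinuousOn y' (Set.Ici (0 : ℝ)))
    (hineq : ∀ t : ℝ, 0 ≤ t →
      y' t + E * Real.sqrt (1 + t) * y t ^ ((3 : ℝ) / 2) ≤ 0) :
    ∀ t : ℝ, 0 ≤ t →
      y t ≤ 36 * y 0 /
        (6 + E * Real.sqrt (y 0) * ((1 + t) ^ ((3 : ℝ) / 2) - 1)) ^ 2 := by
  intro t ht
  have hy0 : 0 ≤ y 0 := hnonneg 0 le_rfl
  set s : ℝ := Real.sqrt (y 0) with hs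
  have hs2 : s ^ 2 = y 0 := Real.sq_sqrt hy0
  have hsnn : 0 ≤ s := Real.sqrt_nonneg _
  -- basic facts
  have hy'le : ∀ x : ℝ, 0 ≤ x → y' x ≤ -(E * Real.sqrt (1 + x) * y x ^ ((3:ℝ)/2)) := by
    intro x hx
    have := hineq x hx
    linarith
  have hycont : ContinuousOn y (Set.Icc 0 t) := by
    intro x hx
    exact ((hderiv x hx.1).continuousAt).continuousWithinAt
  rcases eq_or_lt_of_le hy0 with h0 | h0
  · -- case y 0 = 0 : y is nonincreasing, hence ≡ 0
    have hyt : y t ≤ y 0 := by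
      refine image_le_of_deriv_right_le_deriv_boundary (f := y) (f' := y') (a := 0) (b := t)
        hycont (fun x hx => (hderiv x hx.1).hasDerivWithinAt)
        (B := fun _ => y 0) (B' := fun _ => 0) le_rfl continuousOn_const
        (fun x _ => (hasDerivAt_const x (y 0)).hasDerivWithinAt)
        ?_ (Set.mem_Icc.mpr ⟨ht, le_rfl⟩)
      intro x hx
      have hx0 : (0:ℝ) ≤ x := hx.1
      have h1 : 0 ≤ E * Real.sqrt (1 + x) * y x ^ ((3:ℝ)/2) := by
        have := hnonneg x hx0
        positivity
      have h2 := hy'le x hx0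
      show y' x ≤ 0
      linarith
    have : y t = 0 := le_antisymm (by rw [← h0] at hyt; exact hyt) (hnonneg t ht)
    rw [this, ← h0]
    have hs0 : s = 0 := by rw [hs, ← h0, Real.sqrt_zero]
    rw [hs0]
    norm_num
  · -- main case y 0 > 0
    have hspos : 0 < s := Real.sqrt_pos.mpr h0
    set B : ℝ → ℝ := fun x => 6 + E * s * ((1 + x) ^ ((3:ℝ)/2) - 1) with hB
    have hBpos : ∀ x : ℝ, 0 ≤ x → 0 < B x := by
      intro x hx
      have h1 : (1:ℝ) ≤ (1 + x) ^ ((3:ℝ)/2) :=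
        Real.one_le_rpow (by linarith) (by norm_num)
      have : 0 ≤ E * s * ((1 + x) ^ ((3:ℝ)/2) - 1) := by
        apply mul_nonneg (by positivity); linarith
      simp only [hB]; linarith
    set z : ℝ → ℝ := fun x => 36 * y 0 / (B x) ^ 2 with hz
    set D : ℝ → ℝ := fun x =>
      (0 * B x ^ 2 - 36 * y 0 * ((2:ℕ) * B x ^ 1 * (E * s * (1 * ((3:ℝ)/2) * (1 + x) ^ ((3:ℝ)/2 - 1))))) /
        (B x ^ 2) ^ 2 with hD
    have hzderiv : ∀ x : ℝ, 0 ≤ x → HasDerivAt z (D x) x := by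
      intro x hx
      have h1x : (0:ℝ) < 1 + x := by linarith
      have hrp : HasDerivAt (fun u : ℝ => (1 + u) ^ ((3:ℝ)/2))
          (1 * ((3:ℝ)/2) * (1 + x) ^ ((3:ℝ)/2 - 1)) x := by
        have hid : HasDerivAt (fun u : ℝ => 1 + u) 1 x := by
          simpa using (hasDerivAt_id x).const_add 1
        exact hid.rpow_const (Or.inl (ne_of_gt h1x))
      have hBd : HasDerivAt B (E * s * (1 * ((3:ℝ)/2) * (1 + x) ^ ((3:ℝ)/2 - 1))) x := by
        simpa [hB] using ((hrp.sub_const 1).const_mul (E * s)).const_add 6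
      have hB2 : HasDerivAt (fun u => (B u) ^ 2)
          ((2:ℕ) * B x ^ 1 * (E * s * (1 * ((3:ℝ)/2) * (1 + x) ^ ((3:ℝ)/2 - 1)))) x :=
        hBd.pow 2
      have hne : (B x) ^ 2 ≠ 0 := by
        have := hBpos x hx; positivity
      simpa [hz, hD, Pi.div_def] using (hasDerivAt_const x (36 * y 0)).div hB2 hne
    have hmain : y t ≤ z t := by
      refine image_le_of_deriv_right_lt_deriv_boundary' (f := y) (f' := y') (a := 0) (b := t)
        hycont (fun x hx => (hderiv x hx.1).hasDerivWithinAt)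
        (B := z) (B' := D) ?_ ?_ (fun x hx => (hzderiv x hx.1).hasDerivWithinAt) ?_
        (Set.mem_Icc.mpr ⟨ht, le_rfl⟩)
      · -- initial condition
        have hB0 : B 0 = 6 := by
          show 6 + E * s * ((1 + (0:ℝ)) ^ ((3:ℝ)/2) - 1) = 6
          norm_num
        have hz0 : z 0 = y 0 := by
          show 36 * y 0 / (B 0) ^ 2 = y 0
          rw [hB0]; norm_num
        rw [hz0]
      · intro x hx
        exact ((hzderiv x hx.1).continuousAt).continuousWithinAt
      · -- contact inequality
        intro x hx hcontact
        have hx0 : (0:ℝ) ≤ x := hx.1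
        have hBx : 0 < B x := hBpos x hx0
        have h1x : (0:ℝ) < 1 + x := by linarith
        set u : ℝ := (1 + x) ^ ((1:ℝ)/2) with hu
        have hupos : 0 < u := Real.rpow_pos_of_pos h1x _
        have hsqrt : Real.sqrt (1 + x) = u := by
          rw [hu, Real.sqrt_eq_rpow]
        have hexp : (1 + x) ^ ((3:ℝ)/2 - 1) = u := by
          rw [hu]; norm_num
        -- rewrite y x via contact
        have hzx : z x = (6 * s / B x) ^ 2 := by
          rw [hz]
          field_simp
          rw [← hs2]; ring
        have hzrpow : z x ^ ((3:ℝ)/2) = (6 * s / B x) ^ 3 := by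
          rw [hzx, ← Real.rpow_natCast (6 * s / B x) 2,
            ← Real.rpow_mul (by positivity)]
          rw [show ((2:ℕ):ℝ) * ((3:ℝ)/2) = ((3:ℕ):ℝ) by norm_num,
            Real.rpow_natCast]
        have hyx : y' x ≤ -(E * u * (6 * s / B x) ^ 3) := by
          have := hy'le x hx0
          rw [hcontact, hzrpow, hsqrt] at this
          exact this
        have hDx : D x = -(108 * E * s ^ 3 * u) / (B x) ^ 3 := by
          simp only [hD]
          rw [hexp, ← hs2]
          field_simp
          ring
        have hlhs : -(E * u * (6 * s / B x) ^ 3) = -(216 * E * s ^ 3 * u) / (B x) ^ 3 := by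
          field_simp
          ring
        rw [hDx]
        calc y' x ≤ -(216 * E * s ^ 3 * u) / (B x) ^ 3 := by rw [← hlhs]; exact hyx
          _ < -(108 * E * s ^ 3 * u) / (B x) ^ 3 := by
              rw [div_lt_div_iff₀ (by positivity) (by positivity)]
              nlinarith [mul_pos (mul_pos (mul_pos hE (pow_pos hspos 3)) hupos)
                (pow_pos hBx 3)]
    exact hmain
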